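/- There exist an odd positive integer M and an integer α such that no integer x with x ≡ α (mod M) can be written in the form x = b₁² + b₂² + 2^{n²} with b₁, b₂, n nonnegative integers. In other words, there is a residue class with odd modulus containing no integer of the form b₁² + b₂² + 2^{n²}. -/

import Mathlib

/-- If a prime `p ≡ 3 (mod 4)` divides a sum of two squares, then `p^2` divides it. -/
lemma sq_dvd_sq_add_sq {p : ℕ} (hp : p.Prime) (h3 : p % 4 = 3) (b₁ b₂ : ℕ)
    (h : p ∣ b₁ ^ 2 + b₂ ^ 2) : p ^ 2 ∣ b₁ ^ 2 + b₂ ^ 2 := by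
  haveI : Fact p.Prime := ⟨hp⟩
  have key : ∀ a b : ℕ, p ∣ a ^ 2 + b ^ 2 → p ∣ b := by
    intro a b hab
    have h0 : (a : ZMod p) ^ 2 + (b : ZMod p) ^ 2 = 0 := by
      have := (ZMod.natCast_eq_zero_iff _ p).mpr hab
      push_cast at this
      exact this
    by_contra hb0
    have hb0' : (b : ZMod p) ≠ 0 := by
      intro hb
      exact hb0 ((ZMod.natCast_eq_zero_iff _ p).mp hb)
    have hsq : ((a : ZMod p) * (b : ZMod p)⁻¹) ^ 2 = -1 := by
      field_simp
      linear_combination h0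
    have hisq : IsSquare (-1 : ZMod p) :=
      ⟨(a : ZMod p) * (b : ZMod p)⁻¹, by rw [← hsq]; ring⟩
    exact (ZMod.exists_sq_eq_neg_one_iff.mp hisq) h3
  have hb : p ∣ b₂ := key b₁ b₂ h
  have ha : p ∣ b₁ := key b₂ b₁ (by rwa [add_comm])
  obtain ⟨u, rfl⟩ := ha
  obtain ⟨v, rfl⟩ := hb
  exact ⟨u ^ 2 + v ^ 2, by ring⟩

/-- Periodicity of powers of two modulo `Q`. -/
lemma pow_two_period {D : ℕ} {Q : ℤ} (h : (2:ℤ) ^ D % Q = 1 % Q) (e : ℕ) :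
    (2:ℤ) ^ e % Q = 2 ^ (e % D) % Q := by
  conv_lhs => rw [← Nat.div_add_mod e D]
  rw [pow_add, pow_mul]
  have hm : ((2:ℤ) ^ D) ^ (e / D) ≡ 1 ^ (e / D) [ZMOD Q] := Int.ModEq.pow _ h
  calc ((2:ℤ) ^ D) ^ (e / D) * 2 ^ (e % D) % Q
      = 1 ^ (e / D) * 2 ^ (e % D) % Q := (hm.mul_right _)
    _ = 2 ^ (e % D) % Q := by rw [one_pow, one_mul]

set_option maxRecDepth 100000 in
lemma fin21_sq : ∀ m : Fin 21, (m : ℕ) % 3 ≠ 0 →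
    (m : ℕ) ^ 2 % 21 = 1 ∨ (m : ℕ) ^ 2 % 21 = 4 ∨ (m : ℕ) ^ 2 % 21 = 7 ∨
    (m : ℕ) ^ 2 % 21 = 16 := by decide

set_option maxRecDepth 100000 in
lemma fin342_sq : ∀ m : Fin 342, (m : ℕ) % 6 = 3 →
    (m : ℕ) ^ 2 % 342 = 9 ∨ (m : ℕ) ^ 2 % 342 = 45 ∨ (m : ℕ) ^ 2 % 342 = 63 ∨
    (m : ℕ) ^ 2 % 342 = 81 ∨ (m : ℕ) ^ 2 % 342 = 99 ∨ (m : ℕ) ^ 2 % 342 = 153 ∨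
    (m : ℕ) ^ 2 % 342 = 171 ∨ (m : ℕ) ^ 2 % 342 = 207 ∨ (m : ℕ) ^ 2 % 342 = 225 ∨
    (m : ℕ) ^ 2 % 342 = 315 := by decide

lemma case_three (x k : ℤ) (hk : 112954 - x = 159201 * k) (b₁ b₂ n : ℕ)
    (hs : x = ((b₁ ^ 2 + b₂ ^ 2 : ℕ) : ℤ) + 2 ^ (n ^ 2)) (h : n % 2 = 0) : False := by
  have hmm : n ^ 2 % 6 = (n % 6) ^ 2 % 6 := by rw [Nat.pow_mod]
  have h6 : n % 6 = 0 ∨ n % 6 = 2 ∨ n % 6 = 4 := by omega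
  have hre : n ^ 2 % 6 = 0 ∨ n ^ 2 % 6 = 4 := by
    rcases h6 with h6 | h6 | h6 <;> rw [h6] at hmm <;> norm_num at hmm <;> omega
  have hc := pow_two_period (D := 6) (Q := 9) (by norm_num) (n ^ 2)
  rcases hre with hre | hre <;>
    · rw [hre] at hc
      norm_num at hc
      have h1 : 3 ∣ b₁ ^ 2 + b₂ ^ 2 := by omega
      have h2 := sq_dvd_sq_add_sq (by norm_num) (by norm_num) b₁ b₂ h1
      norm_num at h2
      omega

lemma case_seven (x k : ℤ) (hk : 112954 - x = 159201 * k) (b₁ b₂ n : ℕ)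
    (hs : x = ((b₁ ^ 2 + b₂ ^ 2 : ℕ) : ℤ) + 2 ^ (n ^ 2)) (h : n % 3 ≠ 0) : False := by
  have hmm : n ^ 2 % 21 = (n % 21) ^ 2 % 21 := by rw [Nat.pow_mod]
  have hre := fin21_sq ⟨n % 21, Nat.mod_lt _ (by norm_num)⟩ (by
    simpa [Nat.mod_mod_of_dvd n (by norm_num : 3 ∣ 21)] using h)
  simp only [Fin.val_mk] at hre
  rw [← hmm] at hre
  have hc := pow_two_period (D := 21) (Q := 49) (by norm_num) (n ^ 2)
  rcases hre with hre | hre | hre | hre <;>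
    · rw [hre] at hc
      norm_num at hc
      have h1 : 7 ∣ b₁ ^ 2 + b₂ ^ 2 := by omega
      have h2 := sq_dvd_sq_add_sq (by norm_num) (by norm_num) b₁ b₂ h1
      norm_num at h2
      omega

lemma case_nineteen (x k : ℤ) (hk : 112954 - x = 159201 * k) (b₁ b₂ n : ℕ)
    (hs : x = ((b₁ ^ 2 + b₂ ^ 2 : ℕ) : ℤ) + 2 ^ (n ^ 2)) (h : n % 6 = 3) : False := by
  have hmm : n ^ 2 % 342 = (n % 342) ^ 2 % 342 := by rw [Nat.pow_mod]
  have hre := fin342_sq ⟨n % 342, Nat.mod_lt _ (by norm_num)⟩ (by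
    simpa [Nat.mod_mod_of_dvd n (by norm_num : 6 ∣ 342)] using h)
  simp only [Fin.val_mk] at hre
  rw [← hmm] at hre
  have hc := pow_two_period (D := 342) (Q := 361) (by rfl) (n ^ 2)
  rcases hre with hre | hre | hre | hre | hre | hre | hre | hre | hre | hre <;>
    · rw [hre] at hc
      norm_num at hc
      have h1 : 19 ∣ b₁ ^ 2 + b₂ ^ 2 := by omega
      have h2 := sq_dvd_sq_add_sq (by norm_num) (by norm_num) b₁ b₂ h1
      norm_num at h2
      omega

/-- There is a residue class with odd modulus containing no integer of the form
`b₁² + b₂² + 2^(n²)` with `b₁, b₂, n` nonnegative integers. -/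
theorem exists_odd_residue_class_avoiding_b2_b2_pow2sq :
    ∃ (M : ℕ) (α : ℤ), Odd M ∧ 0 < M ∧
      ∀ x : ℤ, x ≡ α [ZMOD (M : ℤ)] →
        ¬∃ b₁ b₂ n : ℕ, x = (b₁ : ℤ) ^ 2 + (b₂ : ℤ) ^ 2 + 2 ^ (n ^ 2) := by
  refine ⟨159201, 112954, ⟨79600, by norm_num⟩, by norm_num, ?_⟩
  rintro x hx ⟨b₁, b₂, n, hxe⟩
  obtain ⟨k, hk⟩ := Int.ModEq.dvd hx
  have hk' : 112954 - x = 159201 * k := by exact_mod_cast hk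
  have hs : x = ((b₁ ^ 2 + b₂ ^ 2 : ℕ) : ℤ) + 2 ^ (n ^ 2) := by push_cast; linarith
  by_cases h3 : n % 3 = 0
  · by_cases h2 : n % 2 = 0
    · exact case_three x k hk' b₁ b₂ n hs h2
    · exact case_nineteen x k hk' b₁ b₂ n hs (by omega)
  · exact case_seven x k hk' b₁ b₂ n hs h3
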